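/- Let M be a POMDP and C a deterministic k-FSC. Then for every t ≥ 2, the conditional entropy of the next state of M given the full state history equals the one-step conditional entropy of the induced Markov chain: H^C(S_t | S_1,...,S_{t-1}) = H^{u_C}(S_{M,k,t} | S_{M,k,t-1}). -/

import Mathlib

open Finset

section

variable {S Q Z A : Type*} [Fintype S] [Fintype Q] [Fintype Z] [Fintype A]
variable [DecidableEq S] [DecidableEq Q]

/-- One-step transition probabilities of the Markov chain on `S × Q` induced by the
POMDP `(S, sI, A, P, Z, O)` and the `k`-FSC `(Q, q1, γ, δ)`:
`T(⟨s',q'⟩ | ⟨s,q⟩) = ∑_a ∑_z O(z|s) P(s'|s,a) γ(a|q,z) δ(q'|q,z,a)`. -/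
def fscT (P : S → A → S → ℝ) (O : S → Z → ℝ)
    (γ : Q → Z → A → ℝ) (δ : Q → Z → A → Q → ℝ) (x y : S × Q) : ℝ :=
  ∑ a : A, ∑ z : Z, O x.1 z * P x.1 a y.1 * γ x.2 z a * δ x.2 z a y.2

/-- The pmf of a length-`t` trajectory of the induced Markov chain on `S × Q`,
started at `⟨sI, q1⟩`. -/
def fscChainProb (sI : S) (q1 : Q) (P : S → A → S → ℝ) (O : S → Z → ℝ)
    (γ : Q → Z → A → ℝ) (δ : Q → Z → A → Q → ℝ) (t : ℕ) (w : Fin t → S × Q) : ℝ :=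
  (if h : 0 < t then (if w ⟨0, h⟩ = (sI, q1) then (1 : ℝ) else 0) else 1) *
    ∏ k : Fin t, (if h : k.val + 1 < t then fscT P O γ δ (w k) (w ⟨k.val + 1, h⟩) else 1)

/-- The pmf of the state history `(S_1,…,S_t)` of the POMDP under the FSC: the marginal
of the induced chain onto the `S`-component. -/
def fscStateMargin (sI : S) (q1 : Q) (P : S → A → S → ℝ) (O : S → Z → ℝ)
    (γ : Q → Z → A → ℝ) (δ : Q → Z → A → Q → ℝ) (t : ℕ) (u : Fin t → S) : ℝ :=
  ∑ qs : Fin t → Q, fscChainProb sI q1 P O γ δ t (fun i => (u i, qs i))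

variable (sI : S) (q1 : Q) (P : S → A → S → ℝ) (O : S → Z → ℝ)
    (γ : Q → Z → A → ℝ) (δ : Q → Z → A → Q → ℝ) (f : Q → Q)

lemma fscT_zero (hdet : ∀ q z a q', δ q z a q' = if q' = f q then (1 : ℝ) else 0)
    {x y : S × Q} (h : y.2 ≠ f x.2) : fscT P O γ δ x y = 0 := by
  unfold fscT
  simp [hdet, h]

lemma fscT_sum (hP1 : ∀ s a, ∑ s', P s a s' = 1) (hO1 : ∀ s, ∑ z, O s z = 1)
    (hγ1 : ∀ q z, ∑ a, γ q z a = 1)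
    (hdet : ∀ q z a q', δ q z a q' = if q' = f q then (1 : ℝ) else 0)
    (x : S × Q) : ∑ y : S × Q, fscT P O γ δ x y = 1 := by
  have key : ∀ y : S × Q, fscT P O γ δ x y =
      (if y.2 = f x.2 then (1:ℝ) else 0) * ∑ a, ∑ z, O x.1 z * P x.1 a y.1 * γ x.2 z a := by
    intro y
    unfold fscT
    by_cases h : y.2 = f x.2 <;> simp [hdet, h]
  simp only [key]
  rw [Fintype.sum_prod_type]
  simp only [ite_mul, one_mul, zero_mul, Finset.sum_ite_eq', Finset.mem_univ, if_true]
  have h1 : ∀ a z, (∑ s', O x.1 z * P x.1 a s' * γ x.2 z a) = O x.1 z * γ x.2 z a := by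
    intro a z
    calc ∑ s', O x.1 z * P x.1 a s' * γ x.2 z a
        = ∑ s', (O x.1 z * γ x.2 z a) * P x.1 a s' :=
          Finset.sum_congr rfl (fun s' _ => by ring)
      _ = (O x.1 z * γ x.2 z a) * ∑ s', P x.1 a s' := (Finset.mul_sum _ _ _).symm
      _ = O x.1 z * γ x.2 z a := by rw [hP1, mul_one]
  rw [Finset.sum_comm]
  calc ∑ a, ∑ s', ∑ z, O x.1 z * P x.1 a s' * γ x.2 z a
      = ∑ a, ∑ z, ∑ s', O x.1 z * P x.1 a s' * γ x.2 z a :=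
        Finset.sum_congr rfl (fun a _ => Finset.sum_comm)
    _ = ∑ a, ∑ z, O x.1 z * γ x.2 z a := by
        refine Finset.sum_congr rfl fun a _ => Finset.sum_congr rfl fun z _ => h1 a z
    _ = ∑ z, ∑ a, O x.1 z * γ x.2 z a := Finset.sum_comm
    _ = ∑ z, O x.1 z := by
        refine Finset.sum_congr rfl fun z _ => ?_
        rw [← Finset.mul_sum, hγ1, mul_one]
    _ = 1 := hO1 x.1

lemma chain_succ (m : ℕ) (w : Fin (m+1) → S × Q) :
    fscChainProb sI q1 P O γ δ (m+1) w =
      (if w ⟨0, Nat.succ_pos m⟩ = (sI, q1) then (1:ℝ) else 0) *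
        ∏ k : Fin m, fscT P O γ δ (w k.castSucc) (w k.succ) := by
  unfold fscChainProb
  rw [dif_pos (Nat.succ_pos m)]
  congr 1
  rw [Fin.prod_univ_castSucc]
  have hlast : (if h : (Fin.last m).val + 1 < m + 1 then
      fscT P O γ δ (w (Fin.last m)) (w ⟨(Fin.last m).val + 1, h⟩) else 1) = 1 := by
    rw [dif_neg]
    simp [Fin.last]
  rw [hlast, mul_one]
  refine Finset.prod_congr rfl fun k _ => ?_
  rw [dif_pos (by simpa using k.isLt.trans_le (Nat.le_succ m) : (k.castSucc).val + 1 < m + 1)]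
  congr 1

lemma chain_split (n : ℕ) (w : Fin (n+2) → S × Q) :
    fscChainProb sI q1 P O γ δ (n+2) w =
      fscChainProb sI q1 P O γ δ (n+1) (fun i => w i.castSucc) *
        fscT P O γ δ (w ⟨n, by omega⟩) (w ⟨n+1, by omega⟩) := by
  rw [chain_succ, chain_succ, Fin.prod_univ_castSucc]
  have h1 : ∀ j : Fin n, fscT P O γ δ (w j.castSucc.castSucc) (w j.castSucc.succ)
      = fscT P O γ δ (w j.castSucc.castSucc) (w j.succ.castSucc) := by
    intro j; rw [Fin.succ_castSucc]
  have h0 : (Fin.castSucc (⟨0, Nat.succ_pos n⟩ : Fin (n+1))) = (⟨0, Nat.succ_pos (n+1)⟩ : Fin (n+2)) := rfl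
  have hlastc : (Fin.last n).castSucc = (⟨n, by omega⟩ : Fin (n+2)) := rfl
  have hlasts : (Fin.last n).succ = (⟨n+1, by omega⟩ : Fin (n+2)) := rfl
  simp only [Fin.succ_castSucc, hlastc, hlasts, Fin.castSucc_mk]
  ring

lemma chain_support (hdet : ∀ q z a q', δ q z a q' = if q' = f q then (1 : ℝ) else 0)
    (m : ℕ) (w : Fin (m+1) → S × Q)
    (hne : fscChainProb sI q1 P O γ δ (m+1) w ≠ 0) :
    ∀ i : Fin (m+1), (w i).2 = f^[i.val] q1 := by
  rw [chain_succ] at hne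
  have hmul := mul_ne_zero_iff.1 hne
  have hw0 : w ⟨0, Nat.succ_pos m⟩ = (sI, q1) := by
    by_contra h
    exact hmul.1 (if_neg h)
  have hfac : ∀ k : Fin m, fscT P O γ δ (w k.castSucc) (w k.succ) ≠ 0 := by
    intro k
    exact Finset.prod_ne_zero_iff.1 hmul.2 k (Finset.mem_univ k)
  intro i
  induction i using Fin.induction with
  | zero =>
    have h0 : (0 : Fin (m+1)) = ⟨0, Nat.succ_pos m⟩ := by ext; simp
    rw [h0, hw0]
    simp
  | succ k ih =>
    have h2 : (w k.succ).2 = f ((w k.castSucc).2) := by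
      by_contra h
      exact hfac k (fscT_zero P O γ δ f hdet h)
    rw [h2, ih, Fin.val_succ, Fin.coe_castSucc, Function.iterate_succ_apply']

lemma margin_eq (hdet : ∀ q z a q', δ q z a q' = if q' = f q then (1 : ℝ) else 0)
    (m : ℕ) (u : Fin (m+1) → S) :
    fscStateMargin sI q1 P O γ δ (m+1) u =
      fscChainProb sI q1 P O γ δ (m+1) (fun i => (u i, f^[i.val] q1)) := by
  unfold fscStateMargin
  refine Finset.sum_eq_single (fun i : Fin (m+1) => f^[i.val] q1) ?_ ?_
  · intro qs _ hqs
    by_contra h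
    apply hqs
    funext i
    exact chain_support sI q1 P O γ δ f hdet m _ h i
  · intro h
    exact absurd (Finset.mem_univ _) h

lemma sum_chain_weight (hdet : ∀ q z a q', δ q z a q' = if q' = f q then (1 : ℝ) else 0)
    (m : ℕ) (g : (Fin (m+1) → S × Q) → ℝ) :
    ∑ w : Fin (m+1) → S × Q, fscChainProb sI q1 P O γ δ (m+1) w * g w =
      ∑ u : Fin (m+1) → S,
        fscChainProb sI q1 P O γ δ (m+1) (fun i => (u i, f^[i.val] q1)) *
          g (fun i => (u i, f^[i.val] q1)) := by
  rw [← Equiv.sum_comp (Equiv.arrowProdEquivProdArrow (Fin (m+1)) (fun _ => S) (fun _ => Q)).symm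
    (fun w => fscChainProb sI q1 P O γ δ (m+1) w * g w), Fintype.sum_prod_type]
  refine Finset.sum_congr rfl fun u _ => ?_
  refine Finset.sum_eq_single (fun i : Fin (m+1) => f^[i.val] q1) ?_ ?_
  · intro qs _ hqs
    by_contra h
    apply hqs
    have h' : fscChainProb sI q1 P O γ δ (m+1) (fun i => (u i, qs i)) ≠ 0 :=
      fun h0 => h (by simp [Equiv.arrowProdEquivProdArrow, h0])
    funext i
    exact chain_support sI q1 P O γ δ f hdet m _ h' i
  · intro h
    exact absurd (Finset.mem_univ _) h

lemma fiber_sum (n : ℕ) (x y : S × Q) :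
    (∑ w ∈ univ.filter (fun w : Fin (n+2) → S × Q =>
        w ⟨n, by omega⟩ = x ∧ w ⟨n+1, by omega⟩ = y),
      fscChainProb sI q1 P O γ δ (n+2) w)
    = (∑ v ∈ univ.filter (fun v : Fin (n+1) → S × Q => v ⟨n, by omega⟩ = x),
        fscChainProb sI q1 P O γ δ (n+1) v) * fscT P O γ δ x y := by
  rw [Finset.sum_mul]
  refine Finset.sum_nbij' (fun w => fun i : Fin (n+1) => w i.castSucc)
    (fun v => Fin.snoc v y) ?_ ?_ ?_ ?_ ?_
  · intro w hw
    simp only [Finset.mem_filter, Finset.mem_univ, true_and] at hw ⊢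
    exact hw.1
  · intro v hv
    simp only [Finset.mem_filter, Finset.mem_univ, true_and] at hv ⊢
    constructor
    · rw [show (⟨n, by omega⟩ : Fin (n+2)) = Fin.castSucc ⟨n, by omega⟩ from rfl,
        Fin.snoc_castSucc]
      exact hv
    · rw [show (⟨n+1, by omega⟩ : Fin (n+2)) = Fin.last (n+1) from rfl, Fin.snoc_last]
  · intro w hw
    simp only [Finset.mem_filter, Finset.mem_univ, true_and] at hw
    funext i
    induction i using Fin.lastCases with
    | last =>
      simp only [Fin.snoc_last]
      exact (hw.2.symm)
    | cast k =>
      simp only [Fin.snoc_castSucc]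
  · intro v hv
    funext i
    simp only [Fin.snoc_castSucc]
  · intro w hw
    simp only [Finset.mem_filter, Finset.mem_univ, true_and] at hw
    rw [chain_split sI q1 P O γ δ n w, hw.1, hw.2]

theorem main' (hP1 : ∀ s a, ∑ s', P s a s' = 1) (hO1 : ∀ s, ∑ z, O s z = 1)
    (hγ1 : ∀ q z, ∑ a, γ q z a = 1)
    (hdet : ∀ q z a q', δ q z a q' = if q' = f q then (1 : ℝ) else 0) (n : ℕ) :
    (-∑ u : Fin (n+2) → S, fscStateMargin sI q1 P O γ δ (n+2) u *
        Real.log (fscStateMargin sI q1 P O γ δ (n+2) u /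
          fscStateMargin sI q1 P O γ δ (n+1) (fun i => u i.castSucc)))
    =
    (-∑ x : S × Q, ∑ y : S × Q,
        (∑ w ∈ univ.filter (fun w : Fin (n+2) → S × Q =>
            w ⟨n, by omega⟩ = x ∧ w ⟨n+1, by omega⟩ = y),
          fscChainProb sI q1 P O γ δ (n+2) w) *
        Real.log ((∑ w ∈ univ.filter (fun w : Fin (n+2) → S × Q =>
            w ⟨n, by omega⟩ = x ∧ w ⟨n+1, by omega⟩ = y),
          fscChainProb sI q1 P O γ δ (n+2) w) /
          ∑ y' : S × Q, ∑ w ∈ univ.filter (fun w : Fin (n+2) → S × Q =>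
            w ⟨n, by omega⟩ = x ∧ w ⟨n+1, by omega⟩ = y'),
          fscChainProb sI q1 P O γ δ (n+2) w)) := by
  rw [neg_inj]
  have hL : ∑ u : Fin (n+2) → S, fscStateMargin sI q1 P O γ δ (n+2) u *
        Real.log (fscStateMargin sI q1 P O γ δ (n+2) u /
          fscStateMargin sI q1 P O γ δ (n+1) (fun i => u i.castSucc))
      = ∑ w : Fin (n+2) → S × Q, fscChainProb sI q1 P O γ δ (n+2) w *
          Real.log (fscT P O γ δ (w ⟨n, by omega⟩) (w ⟨n+1, by omega⟩)) := by
    rw [sum_chain_weight sI q1 P O γ δ f hdet (n+1)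
      (fun w => Real.log (fscT P O γ δ (w ⟨n, by omega⟩) (w ⟨n+1, by omega⟩)))]
    refine Finset.sum_congr rfl fun u _ => ?_
    simp only [margin_eq sI q1 P O γ δ f hdet]
    have hW : (fun i : Fin (n+1) => ((u i.castSucc, f^[i.val] q1) : S × Q))
        = fun i : Fin (n+1) =>
            ((fun j : Fin (n+2) => ((u j, f^[j.val] q1) : S × Q)) i.castSucc) := by
      funext i
      simp
    rw [hW]
    set W : Fin (n+2) → S × Q := fun j => (u j, f^[j.val] q1) with hWdef
    rw [chain_split sI q1 P O γ δ n W]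
    by_cases h0 : fscChainProb sI q1 P O γ δ (n+1) (fun i => W i.castSucc) *
        fscT P O γ δ (W ⟨n, by omega⟩) (W ⟨n+1, by omega⟩) = 0
    · rw [h0]
      simp
    · have hpre : fscChainProb sI q1 P O γ δ (n+1) (fun i => W i.castSucc) ≠ 0 :=
        fun h => h0 (by rw [h, zero_mul])
      rw [mul_div_cancel_left₀ _ hpre]
  rw [hL]
  -- now the RHS
  have hJ : ∀ x y : S × Q,
      (∑ w ∈ univ.filter (fun w : Fin (n+2) → S × Q =>
          w ⟨n, by omega⟩ = x ∧ w ⟨n+1, by omega⟩ = y),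
        fscChainProb sI q1 P O γ δ (n+2) w)
      = (∑ v ∈ univ.filter (fun v : Fin (n+1) → S × Q => v ⟨n, by omega⟩ = x),
          fscChainProb sI q1 P O γ δ (n+1) v) * fscT P O γ δ x y :=
    fiber_sum sI q1 P O γ δ n
  have hM : ∀ x : S × Q,
      (∑ y' : S × Q, ∑ w ∈ univ.filter (fun w : Fin (n+2) → S × Q =>
          w ⟨n, by omega⟩ = x ∧ w ⟨n+1, by omega⟩ = y'),
        fscChainProb sI q1 P O γ δ (n+2) w)
      = ∑ v ∈ univ.filter (fun v : Fin (n+1) → S × Q => v ⟨n, by omega⟩ = x),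
          fscChainProb sI q1 P O γ δ (n+1) v := by
    intro x
    simp only [hJ]
    rw [← Finset.mul_sum, fscT_sum P O γ δ f hP1 hO1 hγ1 hdet, mul_one]
  calc ∑ w : Fin (n+2) → S × Q, fscChainProb sI q1 P O γ δ (n+2) w *
          Real.log (fscT P O γ δ (w ⟨n, by omega⟩) (w ⟨n+1, by omega⟩))
      = ∑ x : S × Q, ∑ y : S × Q,
          ∑ w ∈ univ.filter (fun w : Fin (n+2) → S × Q =>
            w ⟨n, by omega⟩ = x ∧ w ⟨n+1, by omega⟩ = y),
          fscChainProb sI q1 P O γ δ (n+2) w *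
            Real.log (fscT P O γ δ (w ⟨n, by omega⟩) (w ⟨n+1, by omega⟩)) := by
        have hfib := Finset.sum_fiberwise_of_maps_to
          (s := (univ : Finset (Fin (n+2) → S × Q)))
          (t := (univ : Finset ((S × Q) × (S × Q))))
          (g := fun w => (w ⟨n, by omega⟩, w ⟨n+1, by omega⟩))
          (fun i _ => Finset.mem_univ _)
          (fun w => fscChainProb sI q1 P O γ δ (n+2) w *
            Real.log (fscT P O γ δ (w ⟨n, by omega⟩) (w ⟨n+1, by omega⟩)))
        rw [← hfib, Fintype.sum_prod_type]
        refine Finset.sum_congr rfl fun x _ => Finset.sum_congr rfl fun y _ => ?_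
        refine Finset.sum_congr ?_ (fun _ _ => rfl)
        ext w
        simp [Prod.ext_iff]
      _ = ∑ x : S × Q, ∑ y : S × Q,
          (∑ w ∈ univ.filter (fun w : Fin (n+2) → S × Q =>
              w ⟨n, by omega⟩ = x ∧ w ⟨n+1, by omega⟩ = y),
            fscChainProb sI q1 P O γ δ (n+2) w) * Real.log (fscT P O γ δ x y) := by
        refine Finset.sum_congr rfl fun x _ => Finset.sum_congr rfl fun y _ => ?_
        rw [Finset.sum_mul]
        refine Finset.sum_congr rfl fun w hw => ?_
        simp only [Finset.mem_filter, Finset.mem_univ, true_and] at hw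
        rw [hw.1, hw.2]
      _ = _ := by
        refine Finset.sum_congr rfl fun x _ => Finset.sum_congr rfl fun y _ => ?_
        rw [hM, hJ]
        by_cases h0 : (∑ v ∈ univ.filter (fun v : Fin (n+1) → S × Q =>
            v ⟨n, by omega⟩ = x), fscChainProb sI q1 P O γ δ (n+1) v) = 0
        · rw [h0, zero_mul, zero_mul, zero_mul]
        · rw [mul_div_cancel_left₀ _ h0]

/-- Proposition 1: for a POMDP `M` and a deterministic `k`-FSC (the successor memory
state `f q` is independent of the observation and action), for every `t ≥ 2`,
`H^C(S_t | S_1,…,S_{t-1}) = H^{u_C}(S_{M,k,t} | S_{M,k,t-1})`: the conditional entropy of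
the next POMDP state given the full state history equals the one-step conditional entropy
of the induced Markov chain (conventions `0 log 0 = 0`, `x/0 = 0`). -/
theorem stmt8 (sI : S) (q1 : Q) (P : S → A → S → ℝ) (O : S → Z → ℝ)
    (γ : Q → Z → A → ℝ) (δ : Q → Z → A → Q → ℝ)
    (hP0 : ∀ s a s', 0 ≤ P s a s') (hP1 : ∀ s a, ∑ s', P s a s' = 1)
    (hO0 : ∀ s z, 0 ≤ O s z) (hO1 : ∀ s, ∑ z, O s z = 1)
    (hγ0 : ∀ q z a, 0 ≤ γ q z a) (hγ1 : ∀ q z, ∑ a, γ q z a = 1)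
    (f : Q → Q) (hdet : ∀ q z a q', δ q z a q' = if q' = f q then (1 : ℝ) else 0)
    (t : ℕ) (ht : 2 ≤ t) :
    (-∑ u : Fin t → S, fscStateMargin sI q1 P O γ δ t u *
        Real.log (fscStateMargin sI q1 P O γ δ t u /
          fscStateMargin sI q1 P O γ δ (t - 1) (fun i => u (Fin.castLE (Nat.sub_le t 1) i))))
    =
    (-∑ x : S × Q, ∑ y : S × Q,
        (∑ w ∈ univ.filter (fun w : Fin t → S × Q =>
            w ⟨t - 2, by omega⟩ = x ∧ w ⟨t - 1, by omega⟩ = y),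
          fscChainProb sI q1 P O γ δ t w) *
        Real.log ((∑ w ∈ univ.filter (fun w : Fin t → S × Q =>
            w ⟨t - 2, by omega⟩ = x ∧ w ⟨t - 1, by omega⟩ = y),
          fscChainProb sI q1 P O γ δ t w) /
          ∑ y' : S × Q, ∑ w ∈ univ.filter (fun w : Fin t → S × Q =>
            w ⟨t - 2, by omega⟩ = x ∧ w ⟨t - 1, by omega⟩ = y'),
          fscChainProb sI q1 P O γ δ t w)) := by
  obtain ⟨n, rfl⟩ : ∃ n, t = n + 2 := ⟨t - 2, by omega⟩
  exact main' sI q1 P O γ δ f hP1 hO1 hγ1 hdet n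

end
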